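/- Let M > 0, 0 ≤ a < M, r₊ = M + √(M² − a²), and let ω ∈ ℝ, m ∈ ℤ, Λ ∈ ℝ with Λ > 0 and Λ ≥ m². If mω ≤ am²/(2Mr₊), then the potential V₀(r) = (4Mr·amω − a²m² + (r²−2Mr+a²)Λ)/(r²+a²)² satisfies (r₊² + a²)³ · (dV₀/dr)(r₊) ≥ 4(r₊ − M)(ΛMr₊ − a²m²) ≥ 4(r₊ − M)(Mr₊ − a²)Λ > 0. In particular, dV₀/dr is strictly positive at the horizon for all superradiant frequencies. -/

import Mathlib

set_option maxHeartbeats 1000000 in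
/-- For superradiant frequencies (mω ≤ am²/(2Mr₊)) with Λ > 0, Λ ≥ m², the Kerr
potential V₀ is strictly increasing at the horizon, quantitatively. -/
theorem stmt_5 (M a ω Λ : ℝ) (m : ℤ) (hM : 0 < M) (ha : 0 ≤ a) (haM : a < M)
    (rp : ℝ) (hrp : rp = M + Real.sqrt (M ^ 2 - a ^ 2))
    (hΛpos : 0 < Λ) (hΛm : (m : ℝ) ^ 2 ≤ Λ)
    (hsup : (m : ℝ) * ω ≤ a * (m : ℝ) ^ 2 / (2 * M * rp))
    (V₀ : ℝ → ℝ)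
    (hV₀ : ∀ r, V₀ r =
      (4 * M * r * (a * (m : ℝ) * ω) - a ^ 2 * (m : ℝ) ^ 2
        + (r ^ 2 - 2 * M * r + a ^ 2) * Λ) / (r ^ 2 + a ^ 2) ^ 2) :
    4 * (rp - M) * (Λ * M * rp - a ^ 2 * (m : ℝ) ^ 2)
      ≤ (rp ^ 2 + a ^ 2) ^ 3 * deriv V₀ rp
    ∧ 4 * (rp - M) * (M * rp - a ^ 2) * Λ
      ≤ 4 * (rp - M) * (Λ * M * rp - a ^ 2 * (m : ℝ) ^ 2)
    ∧ 0 < 4 * (rp - M) * (M * rp - a ^ 2) * Λ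
    ∧ 0 < deriv V₀ rp := by
  have hm2 : (0:ℝ) ≤ (m:ℝ)^2 := sq_nonneg _
  have hMa : 0 < M^2 - a^2 := by nlinarith
  have hs : 0 < Real.sqrt (M^2 - a^2) := Real.sqrt_pos.mpr hMa
  have hsq : Real.sqrt (M^2 - a^2) ^ 2 = M^2 - a^2 := Real.sq_sqrt hMa.le
  have hrpM : M < rp := by rw [hrp]; linarith
  have hrp0 : 0 < rp := lt_trans hM hrpM
  have hΔ : rp^2 - 2*M*rp + a^2 = 0 := by rw [hrp]; nlinarith [hsq]
  have hD : rp^2 + a^2 = 2*M*rp := by nlinarith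
  have hDpos : 0 < rp^2 + a^2 := by positivity
  have hD2 : ((rp^2 + a^2)^2) ≠ 0 := by positivity
  -- derivative computation
  have hr2 : HasDerivAt (fun r : ℝ => r^2) (2*rp) rp := by
    simpa using hasDerivAt_pow 2 rp
  have hN : HasDerivAt
      (fun r : ℝ => 4*M*r*(a*(m:ℝ)*ω) - a^2*(m:ℝ)^2 + (r^2 - 2*M*r + a^2)*Λ)
      ((4*M*1)*(a*(m:ℝ)*ω) + (2*rp - (2*M*1))*Λ) rp := by
    exact ((((hasDerivAt_id rp).const_mul (4*M)).mul_const (a*(m:ℝ)*ω)).sub_const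
      (a^2*(m:ℝ)^2)).add
      (((hr2.sub ((hasDerivAt_id rp).const_mul (2*M))).add_const (a^2)).mul_const Λ)
  have hDen : HasDerivAt (fun r : ℝ => (r^2 + a^2)^2)
      ((2:ℕ) * (rp^2 + a^2)^(1:ℕ) * (2*rp)) rp := by
    simpa using (hr2.add_const (a^2)).fun_pow 2
  have hV : HasDerivAt V₀
      ((((4*M*1)*(a*(m:ℝ)*ω) + (2*rp - (2*M*1))*Λ) * ((rp^2+a^2)^2)
        - (4*M*rp*(a*(m:ℝ)*ω) - a^2*(m:ℝ)^2 + (rp^2 - 2*M*rp + a^2)*Λ)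
          * ((2:ℕ) * (rp^2 + a^2)^(1:ℕ) * (2*rp))) / ((rp^2+a^2)^2)^2) rp := by
    have hVf : V₀ = fun r : ℝ =>
        (4*M*r*(a*(m:ℝ)*ω) - a^2*(m:ℝ)^2 + (r^2 - 2*M*r + a^2)*Λ) / (r^2 + a^2)^2 :=
      funext hV₀
    rw [hVf]
    exact hN.div hDen hD2
  have hderiv : deriv V₀ rp =
      (((4*M*1)*(a*(m:ℝ)*ω) + (2*rp - (2*M*1))*Λ) * ((rp^2+a^2)^2)
        - (4*M*rp*(a*(m:ℝ)*ω) - a^2*(m:ℝ)^2 + (rp^2 - 2*M*rp + a^2)*Λ)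
          * ((2:ℕ) * (rp^2 + a^2)^(1:ℕ) * (2*rp))) / ((rp^2+a^2)^2)^2 := hV.deriv
  have hEq : (rp^2 + a^2)^3 * deriv V₀ rp =
      ((4*M)*(a*(m:ℝ)*ω) + (2*rp - 2*M)*Λ) * (rp^2 + a^2)
        - 4*rp*(4*M*rp*(a*(m:ℝ)*ω) - a^2*(m:ℝ)^2 + (rp^2 - 2*M*rp + a^2)*Λ) := by
    rw [hderiv]
    field_simp
    ring
  -- superradiance bound
  have h2Mrp : (0:ℝ) < 2*M*rp := by positivity
  have hsup' : (m:ℝ)*ω * (2*M*rp) ≤ a*(m:ℝ)^2 := by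
    have := (le_div_iff₀ h2Mrp).mp hsup
    linarith
  have key : 8*M*rp*(2*rp - M)*(a*((m:ℝ)*ω)) ≤ 4*(2*rp - M)*(a^2*(m:ℝ)^2) := by
    have hfac : (0:ℝ) ≤ 4*(2*rp - M)*a := by nlinarith
    nlinarith [mul_le_mul_of_nonneg_left hsup' hfac]
  have h1 : 4 * (rp - M) * (Λ * M * rp - a ^ 2 * (m : ℝ) ^ 2)
      ≤ (rp ^ 2 + a ^ 2) ^ 3 * deriv V₀ rp := by
    rw [hEq]
    have e : ((4*M)*(a*(m:ℝ)*ω) + (2*rp - 2*M)*Λ) * (rp^2 + a^2)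
        - 4*rp*(4*M*rp*(a*(m:ℝ)*ω) - a^2*(m:ℝ)^2 + (rp^2 - 2*M*rp + a^2)*Λ)
        = 8*M*rp*(M - 2*rp)*(a*((m:ℝ)*ω)) + 4*rp*(a^2*(m:ℝ)^2)
          + 4*M*rp*(rp - M)*Λ := by
      linear_combination ((4*M)*(a*(m:ℝ)*ω) + (2*rp - 2*M)*Λ) * hD - 4*rp*Λ*hΔ
    rw [e]
    linarith [key]
  have h2 : 4 * (rp - M) * (M * rp - a ^ 2) * Λ
      ≤ 4 * (rp - M) * (Λ * M * rp - a ^ 2 * (m : ℝ) ^ 2) := by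
    have hx : (0:ℝ) ≤ (rp - M) * (a^2 * (Λ - (m:ℝ)^2)) :=
      mul_nonneg (by linarith) (mul_nonneg (sq_nonneg a) (by linarith))
    nlinarith [hx]
  have h3 : 0 < 4 * (rp - M) * (M * rp - a ^ 2) * Λ :=
    mul_pos (mul_pos (by linarith) (by nlinarith)) hΛpos
  have h4 : 0 < deriv V₀ rp := by
    by_contra h
    push_neg at h
    have hle : (rp ^ 2 + a ^ 2) ^ 3 * deriv V₀ rp ≤ 0 :=
      mul_nonpos_of_nonneg_of_nonpos (by positivity) h
    linarith [h1, h2, h3]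
  exact ⟨h1, h2, ⟨h3, h4⟩⟩
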